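/- Let b ≥ 3 be an integer and let T = {a : 1 ≤ a < b/2, gcd(a,b) = 1}, which has φ(b)/2 elements. Assume Okada's theorem that the real numbers {cot(πa/b) : a ∈ T} are linearly independent over ℚ. Let q > 1 be a positive algebraic number, and suppose π/log q is transcendental. If rational numbers c_a (a ∈ T) satisfy Σ_{a∈T} c_a·[((q−1)/log q)·π·cot(πa/b) + (2q−3)(1/2 − a/b)] = 0, then c_a = 0 for all a ∈ T. -/

import Mathlib

open Complex in
/-- `exp (π * a / b * I)` is a `2*b`-th root of unity, hence algebraic. -/
lemma alg_exp_aux (b : ℕ) (hb : 0 < b) (a : ℕ) :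
    IsAlgebraic ℚ (Complex.exp ((Real.pi : ℂ) * a / b * I)) := by
  refine ⟨Polynomial.X ^ (2 * b) - 1, ?_, ?_⟩
  · intro h
    have := congrArg (Polynomial.coeff · (2 * b)) h
    simp [Polynomial.coeff_one, hb.ne', (by omega : 2 * b ≠ 0)] at this
  · have hb' : (b : ℂ) ≠ 0 := Nat.cast_ne_zero.mpr hb.ne'
    have : Complex.exp ((Real.pi : ℂ) * a / b * I) ^ (2 * b) = 1 := by
      rw [← Complex.exp_nat_mul]
      rw [show ((2 * b : ℕ) : ℂ) * ((Real.pi : ℂ) * a / b * I) = (a : ℤ) * (2 * Real.pi * I) by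
        push_cast; field_simp]
      exact Complex.exp_int_mul_two_pi_mul_I a
    simp [this]

lemma alg_cot_aux (b : ℕ) (hb : 0 < b) (a : ℕ) :
    IsAlgebraic ℚ (Real.cot (Real.pi * a / b)) := by
  set θ : ℝ := Real.pi * a / b with hθ
  have hζ : IsAlgebraic ℚ (Complex.exp ((θ : ℂ) * Complex.I)) := by
    have := alg_exp_aux b hb a
    rwa [show (Real.pi : ℂ) * a / b * Complex.I = (θ : ℂ) * Complex.I by
      push_cast [hθ]; ring] at this
  have hζ' : IsAlgebraic ℚ (Complex.exp (-((θ : ℂ) * Complex.I))) := by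
    rw [Complex.exp_neg]
    exact hζ.inv
  have hI : IsAlgebraic ℚ (Complex.I) := by
    refine ⟨Polynomial.X ^ 2 + 1, ?_, by simp⟩
    intro h
    have := congrArg (Polynomial.coeff · 2) h
    simp [Polynomial.coeff_one] at this
  have htwo : IsAlgebraic ℚ ((2 : ℂ))⁻¹ := (isAlgebraic_rat (A := ℂ) ℚ 2).inv
  have ialg : ∀ x : ℂ, IsAlgebraic ℚ x ↔ IsIntegral ℚ x := fun x =>
    isAlgebraic_iff_isIntegral
  have hcos : IsAlgebraic ℚ (Complex.cos θ) := by
    have : Complex.cos θ = (Complex.exp ((θ:ℂ) * Complex.I)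
        + Complex.exp (-((θ:ℂ) * Complex.I))) * (2 : ℂ)⁻¹ := by
      have := Complex.two_cos (θ : ℂ)
      rw [neg_mul] at this
      field_simp
      linear_combination this
    rw [this, ialg]
    exact (((ialg _).mp hζ).add ((ialg _).mp hζ')).mul ((ialg _).mp htwo)
  have hsin : IsAlgebraic ℚ (Complex.sin θ) := by
    have : Complex.sin θ = (Complex.exp (-((θ:ℂ) * Complex.I))
        - Complex.exp ((θ:ℂ) * Complex.I)) * Complex.I * (2 : ℂ)⁻¹ := by
      have := Complex.two_sin (θ : ℂ)
      rw [neg_mul] at this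
      field_simp
      linear_combination this
    rw [this, ialg]
    exact (((((ialg _).mp hζ').sub ((ialg _).mp hζ)).mul
      ((ialg _).mp hI))).mul ((ialg _).mp htwo)
  have hcot : IsAlgebraic ℚ (Complex.cos θ / Complex.sin θ) := by
    rw [div_eq_mul_inv, ialg]
    exact ((ialg _).mp hcos).mul ((ialg _).mp hsin.inv)
  have hmap : (algebraMap ℝ ℂ) (Real.cot θ) = Complex.cos θ / Complex.sin θ := by
    rw [Real.cot_eq_cos_div_sin]
    simp [Complex.ofReal_cos, Complex.ofReal_sin]
  rw [← isAlgebraic_algebraMap_iff (A := ℂ) (Complex.ofReal_injective), hmap]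
  exact hcot

theorem stmt_10 (b : ℕ) (hb : 3 ≤ b)
    (T : Finset ℕ)
    (hT : T = (Finset.range b).filter (fun a => 1 ≤ a ∧ 2 * a < b ∧ Nat.gcd a b = 1))
    (hcard : T.card = Nat.totient b / 2)
    (hOkada : ∀ c : ℕ → ℚ,
      (∑ a ∈ T, (c a : ℝ) * Real.cot (Real.pi * a / b)) = 0 → ∀ a ∈ T, c a = 0)
    (q : ℝ) (hq : 1 < q) (hqalg : IsAlgebraic ℚ q)
    (hπ : Transcendental ℚ (Real.pi / Real.log q))
    (c : ℕ → ℚ)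
    (hsum : ∑ a ∈ T, (c a : ℝ) *
        ((q - 1) / Real.log q * Real.pi * Real.cot (Real.pi * a / b)
          + (2 * q - 3) * (1 / 2 - (a : ℝ) / b)) = 0) :
    ∀ a ∈ T, c a = 0 := by
  have hb0 : 0 < b := by omega
  set L := Real.log q with hL
  have hL0 : 0 < L := Real.log_pos hq
  set S : ℝ := ∑ a ∈ T, (c a : ℝ) * Real.cot (Real.pi * a / b) with hS
  set R : ℝ := ∑ a ∈ T, (c a : ℝ) * (1 / 2 - (a : ℝ) / b) with hR
  have key : Real.pi / L * ((q - 1) * S) + (2 * q - 3) * R = 0 := by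
    rw [hS, hR, Finset.mul_sum, Finset.mul_sum, Finset.mul_sum, ← Finset.sum_add_distrib,
      ← hsum]
    refine Finset.sum_congr rfl fun a _ => ?_
    ring
  -- S is algebraic
  have ialg : ∀ x : ℝ, IsAlgebraic ℚ x ↔ IsIntegral ℚ x := fun x =>
    isAlgebraic_iff_isIntegral
  have hSalg : IsAlgebraic ℚ S := by
    rw [hS, ialg]
    refine IsIntegral.sum _ fun a _ => ?_
    exact ((ialg _).mp (isAlgebraic_rat ℚ (c a))).mul
      ((ialg _).mp (alg_cot_aux b hb0 a))
  -- R is algebraic (it is rational)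
  have hRalg : IsAlgebraic ℚ R := by
    have : R = ((∑ a ∈ T, c a * (1 / 2 - (a : ℚ) / b) : ℚ) : ℝ) := by
      rw [hR]; push_cast; ring
    rw [this]
    exact isAlgebraic_rat ℚ _
  -- S = 0
  have hS0 : S = 0 := by
    by_contra hS0
    apply hπ
    have hq1 : (q - 1) * S ≠ 0 := mul_ne_zero (by linarith) hS0
    have : Real.pi / L = (-((2 * q - 3) * R)) / ((q - 1) * S) := by
      rw [eq_div_iff hq1]
      linarith [key]
    rw [this, div_eq_mul_inv, ialg]
    have hq' := (ialg q).mp hqalg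
    have h2 : IsIntegral ℚ ((2 : ℝ)) := by
      simpa using (ialg _).mp (isAlgebraic_rat (A := ℝ) ℚ 2)
    have h3 : IsIntegral ℚ ((3 : ℝ)) := by
      simpa using (ialg _).mp (isAlgebraic_rat (A := ℝ) ℚ 3)
    have h1 : IsIntegral ℚ ((1 : ℝ)) := by
      simpa using (ialg _).mp (isAlgebraic_rat (A := ℝ) ℚ 1)
    have hnum : IsIntegral ℚ (-((2 * q - 3) * R)) :=
      (((h2.mul hq').sub h3).mul ((ialg _).mp hRalg)).neg
    have hden : IsAlgebraic ℚ (((q - 1) * S)⁻¹) :=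
      (((ialg _).mpr ((hq'.sub h1).mul ((ialg _).mp hSalg))).inv)
    exact hnum.mul ((ialg _).mp hden)
  exact hOkada c hS0
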